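/- arXiv:1005.2677 — 8 statements merged into one kernel-verified Lean document; each statement's English description precedes it below -/
import Mathlib

section
/- Let A be a traceless 2×2 complex matrix, and let l, w ∈ ℂ satisfy l² = det A and w² = 2·i·l·(A₁₁ − i·l) with w ≠ 0, where A₁₁ is the (1,1)-entry of A. Define T := (i/w)·(A − i·l·σ₃)·σ₃, where σ₃ = diag(1,−1). Then det T = 1 and A·T = T·(−i·l·σ₃); that is, T diagonalizes A with T⁻¹AT = −i·l·σ₃. -/
open Complex Matrix

theorem stmt0 (A : Matrix (Fin 2) (Fin 2) ℂ) (hA : A.trace = 0)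
    (l w : ℂ) (hl : l ^ 2 = A.det)
    (hw : w ^ 2 = 2 * Complex.I * l * (A 0 0 - Complex.I * l)) (hw0 : w ≠ 0) :
    let σ₃ : Matrix (Fin 2) (Fin 2) ℂ := !![1, 0; 0, -1]
    let T : Matrix (Fin 2) (Fin 2) ℂ := (Complex.I / w) • ((A - (Complex.I * l) • σ₃) * σ₃)
    T.det = 1 ∧ A * T = T * ((-(Complex.I * l)) • σ₃) := by
  intro σ₃ T
  have hd : A 1 1 = -A 0 0 := by
    have h := hA
    rw [Matrix.trace_fin_two] at h
    linear_combination h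
  have hdet : A.det = A 0 0 * A 1 1 - A 0 1 * A 1 0 := Matrix.det_fin_two A
  rw [hdet, hd] at hl
  have hI : Complex.I ^ 2 = -1 := Complex.I_sq
  constructor
  · show ((Complex.I / w) • ((A - (Complex.I * l) • σ₃) * σ₃)).det = 1
    rw [Matrix.det_smul, Matrix.det_mul]
    simp only [Matrix.det_fin_two, Matrix.sub_apply, Matrix.smul_apply, σ₃,
      Matrix.cons_val', Matrix.cons_val_zero, Matrix.cons_val_one, Matrix.head_cons,
      Matrix.head_fin_const, Matrix.empty_val', Matrix.cons_val_fin_one, smul_eq_mul,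
      Fintype.card_fin, hd, Matrix.of_apply]
    field_simp
    linear_combination -hl - hw + l ^ 2 * hI + (A 0 0 ^ 2 + A 0 1 * A 1 0 + l ^ 2 - 2 * Complex.I * A 0 0 * l + (Complex.I ^ 2 - 1) * l ^ 2) * hI
  · ext i j
    fin_cases i <;> fin_cases j <;>
      simp [T, σ₃, Matrix.mul_apply, Fin.sum_univ_two, Matrix.sub_apply, Matrix.smul_apply,
        div_mul_eq_mul_div, hd] <;>
      field_simp <;>
      (first
        | ring1
        | linear_combination Complex.I * hl - Complex.I * l ^ 2 * hI
        | linear_combination -Complex.I * w ^ 2 * hl + Complex.I * w ^ 2 * l ^ 2 * hI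
        | linear_combination hl - l ^ 2 * hI
        | linear_combination -hl + l ^ 2 * hI)
end

section
/- Let a, s₀⁰, s₀^∞, s₁^∞ ∈ ℂ and let G be an invertible 2×2 complex matrix. Define S₀⁰ := [[1, s₀⁰],[0,1]], S₀^∞ := [[1,0],[s₀^∞,1]], S₁^∞ := [[1, s₁^∞],[0,1]], σ₁ := [[0,1],[1,0]], σ₃ := [[1,0],[0,−1]], and E := diag(exp(−π(a − i/2)), exp(π(a − i/2))). If the semi-cyclic relation G⁻¹·S₀⁰·σ₁·G = S₀^∞·S₁^∞·σ₃·E holds, then s₀^∞·s₁^∞ = −1 − exp(−2πa) − i·s₀⁰·exp(−πa). -/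
open Complex Matrix

theorem stmt2 (a s00 s0inf s1inf : ℂ) (G : Matrix (Fin 2) (Fin 2) ℂ)
    (hG : IsUnit G)
    (h : G⁻¹ * !![1, s00; 0, 1] * !![0, 1; 1, 0] * G =
      !![1, 0; s0inf, 1] * !![1, s1inf; 0, 1] * !![1, 0; 0, -1] *
        !![Complex.exp (-((Real.pi : ℂ) * (a - Complex.I / 2))), 0;
           0, Complex.exp ((Real.pi : ℂ) * (a - Complex.I / 2))]) :
    s0inf * s1inf =
      -1 - Complex.exp (-(2 * (Real.pi : ℂ) * a)) -
        Complex.I * s00 * Complex.exp (-((Real.pi : ℂ) * a)) := by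
  have t := congrArg Matrix.trace h
  rw [Matrix.trace_mul_comm, ← Matrix.mul_assoc, ← Matrix.mul_assoc,
    Matrix.mul_nonsing_inv G ((Matrix.isUnit_iff_isUnit_det G).mp hG), Matrix.one_mul] at t
  simp only [Matrix.mul_fin_two, Matrix.trace_fin_two_of] at t
  -- exp identities
  have hI : Complex.exp ((Real.pi : ℂ) * Complex.I / 2) = Complex.I := by
    have : (Real.pi : ℂ) * Complex.I / 2 = ((Real.pi / 2 : ℝ) : ℂ) * Complex.I := by
      push_cast; ring
    rw [this, Complex.exp_mul_I, ← Complex.ofReal_cos, ← Complex.ofReal_sin,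
      Real.cos_pi_div_two, Real.sin_pi_div_two]
    simp
  have h1 : Complex.exp (-((Real.pi : ℂ) * (a - Complex.I / 2)))
      = Complex.I * Complex.exp (-((Real.pi : ℂ) * a)) := by
    have : -((Real.pi : ℂ) * (a - Complex.I / 2))
        = (Real.pi : ℂ) * Complex.I / 2 + -((Real.pi : ℂ) * a) := by ring
    rw [this, Complex.exp_add, hI]
  have h2 : Complex.exp ((Real.pi : ℂ) * (a - Complex.I / 2))
      = -Complex.I * Complex.exp ((Real.pi : ℂ) * a) := by
    have e : (Real.pi : ℂ) * (a - Complex.I / 2)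
        = (Real.pi : ℂ) * a - (Real.pi : ℂ) * Complex.I / 2 := by ring
    rw [e, Complex.exp_sub, hI, Complex.div_I]
    ring
  rw [h1, h2] at t
  have hu : Complex.exp (-((Real.pi : ℂ) * a)) * Complex.exp ((Real.pi : ℂ) * a) = 1 := by
    rw [← Complex.exp_add]; ring_nf; exact Complex.exp_zero
  have hv : Complex.exp (-((Real.pi : ℂ) * a)) * Complex.exp (-((Real.pi : ℂ) * a))
      = Complex.exp (-(2 * (Real.pi : ℂ) * a)) := by
    rw [← Complex.exp_add]; ring_nf
  set v := Complex.exp (-((Real.pi : ℂ) * a))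
  set u := Complex.exp ((Real.pi : ℂ) * a)
  linear_combination (Complex.I * v) * t - (s0inf * s1inf + 1) * hu - hv
    + (v * v + (s0inf * s1inf + 1) * u * v) * Complex.I_sq
end

section
/- Let a, s₀⁰, s₀^∞, s₁^∞, g₁₁, g₁₂, g₂₁, g₂₂ ∈ ℂ with g₁₁g₂₂ − g₁₂g₂₁ = 1, and set G := [[g₁₁,g₁₂],[g₂₁,g₂₂]]. With S₀⁰ := [[1,s₀⁰],[0,1]], S₀^∞ := [[1,0],[s₀^∞,1]], S₁^∞ := [[1,s₁^∞],[0,1]], σ₁ := [[0,1],[1,0]], σ₃ := diag(1,−1), E := diag(exp(−π(a−i/2)), exp(π(a−i/2))), assume the semi-cyclic relation G⁻¹·S₀⁰·σ₁·G = S₀^∞·S₁^∞·σ₃·E. Then the following three equations of the monodromy manifold hold: (i) g₂₂g₂₁ − g₁₁g₁₂ + s₀⁰g₁₁g₂₂ = i·e^{−πa}; (ii) g₁₁² − g₂₁² − s₀⁰g₁₁g₂₁ = i·s₀^∞·e^{−πa}; (iii) g₂₂² − g₁₂² + s₀⁰g₁₂g₂₂ = i·s₁^∞·e^{πa}. -/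
open Complex Matrix

theorem stmt3 (a s00 s0inf s1inf g11 g12 g21 g22 : ℂ)
    (hdet : g11 * g22 - g12 * g21 = 1)
    (h : (!![g11, g12; g21, g22] : Matrix (Fin 2) (Fin 2) ℂ)⁻¹ * !![1, s00; 0, 1] *
        !![0, 1; 1, 0] * !![g11, g12; g21, g22] =
      !![1, 0; s0inf, 1] * !![1, s1inf; 0, 1] * !![1, 0; 0, -1] *
        !![Complex.exp (-((Real.pi : ℂ) * (a - Complex.I / 2))), 0;
           0, Complex.exp ((Real.pi : ℂ) * (a - Complex.I / 2))]) :
    g22 * g21 - g11 * g12 + s00 * g11 * g22 = Complex.I * Complex.exp (-((Real.pi : ℂ) * a)) ∧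
    g11 ^ 2 - g21 ^ 2 - s00 * g11 * g21 =
      Complex.I * s0inf * Complex.exp (-((Real.pi : ℂ) * a)) ∧
    g22 ^ 2 - g12 ^ 2 + s00 * g12 * g22 =
      Complex.I * s1inf * Complex.exp ((Real.pi : ℂ) * a) := by
  have hinv : (!![g11, g12; g21, g22] : Matrix (Fin 2) (Fin 2) ℂ)⁻¹ =
      !![g22, -g12; -g21, g11] := by
    apply inv_eq_left_inv
    ext i j
    fin_cases i <;> fin_cases j <;>
      simp [Matrix.mul_apply, Fin.sum_univ_two, Matrix.one_apply] <;>
      first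
      | ring1
      | linear_combination hdet
      | linear_combination -hdet
  rw [hinv] at h
  have hI : Complex.exp ((Real.pi : ℂ) * (Complex.I / 2)) = Complex.I := by
    rw [show (Real.pi : ℂ) * (Complex.I / 2) = ((Real.pi : ℂ) / 2) * Complex.I by ring,
      Complex.exp_mul_I]
    norm_cast
    rw [Real.cos_pi_div_two, Real.sin_pi_div_two]
    simp
  have hE1 : Complex.exp (-((Real.pi : ℂ) * (a - Complex.I / 2))) =
      Complex.I * Complex.exp (-((Real.pi : ℂ) * a)) := by
    rw [show -((Real.pi : ℂ) * (a - Complex.I / 2)) =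
      (Real.pi : ℂ) * (Complex.I / 2) + -((Real.pi : ℂ) * a) by ring, Complex.exp_add, hI]
  have hE2 : Complex.exp ((Real.pi : ℂ) * (a - Complex.I / 2)) =
      -Complex.I * Complex.exp ((Real.pi : ℂ) * a) := by
    rw [show (Real.pi : ℂ) * (a - Complex.I / 2) =
      (Real.pi : ℂ) * a + -((Real.pi : ℂ) * (Complex.I / 2)) by ring, Complex.exp_add,
      Complex.exp_neg, hI, Complex.inv_I]
    ring
  have h00 := congrFun (congrFun h 0) 0
  have h10 := congrFun (congrFun h 1) 0
  have h01 := congrFun (congrFun h 0) 1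
  have h11 := congrFun (congrFun h 1) 1
  simp [Matrix.mul_apply, Fin.sum_univ_two] at h00 h10 h01 h11
  rw [hE1] at h00 h10
  rw [hE2] at h01
  refine ⟨?_, ?_, ?_⟩
  · linear_combination h00
  · linear_combination h10
  · linear_combination h01
end

section
/- Let a, b ∈ ℂ with b ≠ 0, ε ∈ {1, −1}, τₛ ∈ ℂ \ {0}, and let u be analytic near τₛ with u(τₛ) = 0 and satisfying u·u'' = (u')² − u·u'/τ + (−8εu³ + 2ab·u)/τ + b² near τₛ (with τ ≠ 0 there). Then u''(τₛ) = (u'(τₛ) − 2ab)/τₛ. Equivalently, if u'(τₛ) = i·s·b with s ∈ {1,−1}, the second Taylor coefficient of u at τₛ equals b₂ˢ = −(b/τₛ)·(a − i·s/2). -/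
open Complex Filter

theorem stmt12 (a b ε τs : ℂ) (hε : ε = 1 ∨ ε = -1) (hb : b ≠ 0) (hτ : τs ≠ 0)
    (u : ℂ → ℂ) (hu : AnalyticAt ℂ u τs) (hz : u τs = 0)
    (heq : ∀ᶠ τ in nhds τs, τ ≠ 0 →
      u τ * deriv (deriv u) τ =
        (deriv u τ) ^ 2 - u τ * deriv u τ / τ +
          (-8 * ε * u τ ^ 3 + 2 * a * b * u τ) / τ + b ^ 2) :
    deriv (deriv u) τs = (deriv u τs - 2 * a * b) / τs ∧
      ∀ s : ℂ, (s = 1 ∨ s = -1) → deriv u τs = Complex.I * s * b →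
        deriv (deriv u) τs / 2 = -(b / τs) * (a - Complex.I * s / 2) := by
  have aderiv : ∀ (f : ℂ → ℂ) (x : ℂ), AnalyticAt ℂ f x → AnalyticAt ℂ (deriv f) x := by
    intro f x h
    exact ((ContinuousLinearMap.apply ℂ ℂ (1 : ℂ)).analyticAt _).comp h.fderiv
  have hu1 : AnalyticAt ℂ (deriv u) τs := aderiv u τs hu
  have hu2 : AnalyticAt ℂ (deriv (deriv u)) τs := aderiv (deriv u) τs hu1
  have hne : ∀ᶠ τ in nhds τs, τ ≠ 0 := isOpen_ne.mem_nhds hτ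
  have heq' : (fun τ => u τ * deriv (deriv u) τ) =ᶠ[nhds τs]
      fun τ => (deriv u τ) ^ 2 - u τ * deriv u τ / τ +
          (-8 * ε * u τ ^ 3 + 2 * a * b * u τ) / τ + b ^ 2 := by
    filter_upwards [heq, hne] with τ h1 h2
    exact h1 h2
  set q := deriv u τs with hq
  set r := deriv (deriv u) τs with hr
  -- value at τs : q^2 = -b^2
  have h0 : q ^ 2 + b ^ 2 = 0 := by
    have h := heq'.self_of_nhds
    simp only [hz] at h
    field_simp at h
    have h' : τs * (q ^ 2 + b ^ 2) = 0 := by linear_combination -h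
    exact (mul_eq_zero.mp h').resolve_left hτ
  have hq0 : q ≠ 0 := by
    intro h
    rw [h] at h0
    simp at h0
    exact hb h0
  -- derivatives
  have hdu : HasDerivAt u q τs := hu.differentiableAt.hasDerivAt
  have hdu1 : HasDerivAt (deriv u) r τs := hu1.differentiableAt.hasDerivAt
  have hdu2 : HasDerivAt (deriv (deriv u)) (deriv (deriv (deriv u)) τs) τs :=
    hu2.differentiableAt.hasDerivAt
  have hL : HasDerivAt (fun τ => u τ * deriv (deriv u) τ)
      (q * deriv (deriv u) τs + u τs * deriv (deriv (deriv u)) τs) τs := hdu.mul hdu2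
  have hid : HasDerivAt (fun τ : ℂ => τ) 1 τs := hasDerivAt_id τs
  have hR2 : HasDerivAt (fun τ => u τ * deriv u τ / τ)
      (((q * deriv u τs + u τs * r) * τs - u τs * deriv u τs * 1) / τs ^ 2) τs :=
    (hdu.mul hdu1).div hid hτ
  have hR3num : HasDerivAt (fun τ => -8 * ε * u τ ^ 3 + 2 * a * b * u τ)
      (-8 * ε * (3 * u τs ^ 2 * q) + 2 * a * b * q) τs :=
    ((hdu.pow 3).const_mul (-8 * ε)).add (hdu.const_mul (2 * a * b)) |>.congr_deriv (by
      ring)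
  have hR3 : HasDerivAt (fun τ => (-8 * ε * u τ ^ 3 + 2 * a * b * u τ) / τ)
      (((-8 * ε * (3 * u τs ^ 2 * q) + 2 * a * b * q) * τs -
        (-8 * ε * u τs ^ 3 + 2 * a * b * u τs) * 1) / τs ^ 2) τs := hR3num.div hid hτ
  have hR1 : HasDerivAt (fun τ => (deriv u τ) ^ 2) (2 * q * r) τs :=
    (hdu1.pow 2).congr_deriv (by ring)
  have hR : HasDerivAt (fun τ => (deriv u τ) ^ 2 - u τ * deriv u τ / τ +
      (-8 * ε * u τ ^ 3 + 2 * a * b * u τ) / τ + b ^ 2)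
      (2 * q * r - ((q * deriv u τs + u τs * r) * τs - u τs * deriv u τs * 1) / τs ^ 2 +
        ((-8 * ε * (3 * u τs ^ 2 * q) + 2 * a * b * q) * τs -
          (-8 * ε * u τs ^ 3 + 2 * a * b * u τs) * 1) / τs ^ 2) τs :=
    ((hR1.sub hR2).add hR3).add_const (b ^ 2)
  have hderiv : q * deriv (deriv u) τs + u τs * deriv (deriv (deriv u)) τs =
      2 * q * r - ((q * deriv u τs + u τs * r) * τs - u τs * deriv u τs * 1) / τs ^ 2 +
        ((-8 * ε * (3 * u τs ^ 2 * q) + 2 * a * b * q) * τs -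
          (-8 * ε * u τs ^ 3 + 2 * a * b * u τs) * 1) / τs ^ 2 := by
    rw [← hL.deriv, ← hR.deriv]
    exact heq'.deriv_eq
  rw [hz, ← hq, ← hr] at hderiv
  simp only [zero_mul, mul_zero, add_zero, zero_pow, one_mul, mul_one] at hderiv
  have key : r = (q - 2 * a * b) / τs := by
    have hτ2 : τs ^ 2 ≠ 0 := pow_ne_zero 2 hτ
    field_simp at hderiv ⊢
    have h1 : τs * (q * (r * τs)) = τs * (q * (q - 2 * a * b)) := by
      linear_combination -hderiv
    exact mul_left_cancel₀ hq0 (mul_left_cancel₀ hτ h1)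
  constructor
  · exact key
  · intro s hs hqs
    rw [key, hqs]
    field_simp
    ring
end

section
/- Let a, b ∈ ℂ, ε ∈ {1, −1}, τ∞ ∈ ℂ \ {0}, and c₋₂, c₋₁ ∈ ℂ with c₋₂ ≠ 0. Suppose g is analytic on a neighborhood of τ∞ and the function u(τ) := c₋₂/(τ−τ∞)² + c₋₁/(τ−τ∞) + g(τ) satisfies, on a punctured neighborhood of τ∞ (with τ ≠ 0), the equation u·u'' = (u')² − u·u'/τ + (−8εu³ + 2ab·u)/τ + b². Then c₋₂ = −τ∞/(4ε) and c₋₁ = 0. That is, every double pole of a solution of the degenerate Painlevé III equation has principal part −τ∞/(4ε(τ−τ∞)²). -/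
set_option maxHeartbeats 4000000
set_option maxRecDepth 10000

open Complex Filter

theorem analyticAt_deriv' (g : ℂ → ℂ) (x : ℂ) (h : AnalyticAt ℂ g x) :
    AnalyticAt ℂ (deriv g) x := by
  have h2 : AnalyticAt ℂ (fun y => fderiv ℂ g y 1) x :=
    ((ContinuousLinearMap.apply ℂ ℂ (1:ℂ)).analyticAt _).comp h.fderiv
  have : deriv g = fun y => fderiv ℂ g y 1 := by funext y; rw [fderiv_apply_one_eq_deriv]
  rw [this]; exact h2

theorem stmt13 (a b ε τ₀ c₂ c₁ : ℂ) (hε : ε = 1 ∨ ε = -1) (hτ : τ₀ ≠ 0)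
    (hc : c₂ ≠ 0) (g u : ℂ → ℂ) (hg : AnalyticAt ℂ g τ₀)
    (hu : ∀ t, u t = c₂ / (t - τ₀) ^ 2 + c₁ / (t - τ₀) + g t)
    (heq : ∀ᶠ τ in nhdsWithin τ₀ {τ₀}ᶜ, τ ≠ 0 →
      u τ * deriv (deriv u) τ =
        (deriv u τ) ^ 2 - u τ * deriv u τ / τ +
          (-8 * ε * u τ ^ 3 + 2 * a * b * u τ) / τ + b ^ 2) :
    c₂ = -τ₀ / (4 * ε) ∧ c₁ = 0 := by
  have hg1 : AnalyticAt ℂ (deriv g) τ₀ := analyticAt_deriv' g τ₀ hg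
  have hg2 : AnalyticAt ℂ (deriv (deriv g)) τ₀ := analyticAt_deriv' _ τ₀ hg1
  -- open set where everything is nice
  have hU : ∀ᶠ τ in nhds τ₀, AnalyticAt ℂ g τ ∧ AnalyticAt ℂ (deriv g) τ ∧ τ ≠ 0 := by
    filter_upwards [hg.eventually_analyticAt, hg1.eventually_analyticAt,
      eventually_ne_nhds hτ] with τ h1 h2 h3
    exact ⟨h1, h2, h3⟩
  obtain ⟨U, hUprop, hUopen, hτ₀U⟩ := eventually_nhds_iff.mp hU
  set v : ℂ → ℂ := fun τ => -2*c₂/(τ-τ₀)^3 - c₁/(τ-τ₀)^2 + deriv g τ with hvdef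
  have hufun : u = fun t => c₂ / (t - τ₀) ^ 2 + c₁ / (t - τ₀) + g t := funext hu
  -- first derivative of u on U \ {τ₀}
  have hdu : ∀ τ ∈ U, τ ≠ τ₀ → HasDerivAt u (v τ) τ := by
    intro τ hτU hne
    have hs : τ - τ₀ ≠ 0 := sub_ne_zero.mpr hne
    have hs0 : HasDerivAt (fun t : ℂ => t - τ₀) 1 τ := (hasDerivAt_id τ).sub_const τ₀
    have h1 : HasDerivAt (fun t : ℂ => c₂ / (t - τ₀) ^ 2)
        ((0 * (τ-τ₀)^2 - c₂ * ((2:ℕ) * (τ-τ₀)^1 * 1)) / ((τ-τ₀)^2)^2) τ :=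
      (hasDerivAt_const τ c₂).div (hs0.pow 2) (pow_ne_zero 2 hs)
    have h2 : HasDerivAt (fun t : ℂ => c₁ / (t - τ₀))
        ((0 * (τ-τ₀) - c₁ * 1) / (τ-τ₀)^2) τ :=
      (hasDerivAt_const τ c₁).div hs0 hs
    have h3 : HasDerivAt g (deriv g τ) τ := (hUprop τ hτU).1.differentiableAt.hasDerivAt
    have := (h1.add h2).add h3
    rw [hufun]
    refine this.congr_deriv ?_
    rw [hvdef]
    field_simp
    ring
  have hdu' : ∀ τ ∈ U, τ ≠ τ₀ → deriv u τ = v τ := fun τ h1 h2 => (hdu τ h1 h2).deriv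
  -- second derivative
  have hddu : ∀ τ ∈ U, τ ≠ τ₀ →
      deriv (deriv u) τ = 6*c₂/(τ-τ₀)^4 + 2*c₁/(τ-τ₀)^3 + deriv (deriv g) τ := by
    intro τ hτU hne
    have hs : τ - τ₀ ≠ 0 := sub_ne_zero.mpr hne
    have hopen : IsOpen (U \ {τ₀}) := hUopen.sdiff isClosed_singleton
    have hmem : τ ∈ U \ {τ₀} := ⟨hτU, hne⟩
    have hev : deriv u =ᶠ[nhds τ] v := by
      filter_upwards [hopen.mem_nhds hmem] with x hx
      exact hdu' x hx.1 hx.2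
    have hs0 : HasDerivAt (fun t : ℂ => t - τ₀) 1 τ := (hasDerivAt_id τ).sub_const τ₀
    have h1 : HasDerivAt (fun t : ℂ => -2*c₂ / (t - τ₀) ^ 3)
        ((0 * (τ-τ₀)^3 - (-2*c₂) * ((3:ℕ) * (τ-τ₀)^2 * 1)) / ((τ-τ₀)^3)^2) τ :=
      (hasDerivAt_const τ (-2*c₂)).div (hs0.pow 3) (pow_ne_zero 3 hs)
    have h2 : HasDerivAt (fun t : ℂ => c₁ / (t - τ₀) ^ 2)
        ((0 * (τ-τ₀)^2 - c₁ * ((2:ℕ) * (τ-τ₀)^1 * 1)) / ((τ-τ₀)^2)^2) τ :=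
      (hasDerivAt_const τ c₁).div (hs0.pow 2) (pow_ne_zero 2 hs)
    have h3 : HasDerivAt (deriv g) (deriv (deriv g) τ) τ :=
      (hUprop τ hτU).2.1.differentiableAt.hasDerivAt
    have hv : HasDerivAt v _ τ := (h1.sub h2).add h3
    rw [hev.deriv_eq, hv.deriv]
    field_simp
    ring
  -- the analytic function P
  set P : ℂ → ℂ := fun τ =>
    (c₂ + c₁*(τ-τ₀) + g τ*(τ-τ₀)^2) * (6*c₂ + 2*c₁*(τ-τ₀) + deriv (deriv g) τ*(τ-τ₀)^4)
    - (-2*c₂ - c₁*(τ-τ₀) + deriv g τ*(τ-τ₀)^3)^2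
    + (c₂ + c₁*(τ-τ₀) + g τ*(τ-τ₀)^2) * (-2*c₂ - c₁*(τ-τ₀) + deriv g τ*(τ-τ₀)^3) * (τ-τ₀)/τ
    + 8*ε*(c₂ + c₁*(τ-τ₀) + g τ*(τ-τ₀)^2)^3/τ
    - 2*a*b*(c₂ + c₁*(τ-τ₀) + g τ*(τ-τ₀)^2)*(τ-τ₀)^4/τ
    - b^2*(τ-τ₀)^6 with hPdef
  -- P vanishes on a punctured neighborhood
  have hP0 : ∀ᶠ τ in nhdsWithin τ₀ {τ₀}ᶜ, P τ = 0 := by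
    filter_upwards [heq, eventually_nhdsWithin_of_eventually_nhds (hUopen.mem_nhds hτ₀U),
      self_mem_nhdsWithin] with τ he hτU hne
    have hne' : τ ≠ τ₀ := hne
    have hs : τ - τ₀ ≠ 0 := sub_ne_zero.mpr hne'
    have hτ0 : τ ≠ 0 := (hUprop τ hτU).2.2
    have e := he hτ0
    have e' : τ * (u τ * deriv (deriv u) τ) = τ * (deriv u τ)^2 - u τ * deriv u τ
        + (-8*ε*u τ^3 + 2*a*b*u τ) + τ*b^2 := by
      rw [e]; field_simp
    have h1 : (τ-τ₀)^2 * u τ = c₂ + c₁*(τ-τ₀) + g τ*(τ-τ₀)^2 := by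
      rw [hu]; field_simp
    have h2 : (τ-τ₀)^3 * deriv u τ = -2*c₂ - c₁*(τ-τ₀) + deriv g τ*(τ-τ₀)^3 := by
      rw [hdu' τ hτU hne', hvdef]; field_simp
    have h3 : (τ-τ₀)^4 * deriv (deriv u) τ = 6*c₂ + 2*c₁*(τ-τ₀) + deriv (deriv g) τ*(τ-τ₀)^4 := by
      rw [hddu τ hτU hne']; field_simp
    set A := c₂ + c₁*(τ-τ₀) + g τ*(τ-τ₀)^2 with hA'
    set B := 6*c₂ + 2*c₁*(τ-τ₀) + deriv (deriv g) τ*(τ-τ₀)^4 with hB'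
    set C := -2*c₂ - c₁*(τ-τ₀) + deriv g τ*(τ-τ₀)^3 with hC'
    have hG : τ*(A*B) - τ*C^2 + A*C*(τ-τ₀) + 8*ε*A^3 - 2*a*b*A*(τ-τ₀)^4
        - τ*b^2*(τ-τ₀)^6 = 0 := by
      linear_combination (τ-τ₀)^6 * e'
        + (-τ*B - (τ-τ₀)*C - 8*ε*(A^2 + A*(τ-τ₀)^2*u τ + (τ-τ₀)^4*(u τ)^2)
            + 2*a*b*(τ-τ₀)^4) * h1
        + (τ*(C + (τ-τ₀)^3*deriv u τ) - (τ-τ₀)^3*u τ) * h2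
        + (-τ*(τ-τ₀)^2*u τ) * h3
    rw [hPdef]
    simp only [← hA', ← hB', ← hC']
    have hexp : A * B - C^2 + A*C*(τ-τ₀)/τ + 8*ε*A^3/τ - 2*a*b*A*(τ-τ₀)^4/τ
        - b^2*(τ-τ₀)^6
        = (τ*(A*B) - τ*C^2 + A*C*(τ-τ₀) + 8*ε*A^3 - 2*a*b*A*(τ-τ₀)^4
            - τ*b^2*(τ-τ₀)^6) / τ := by
      field_simp
    rw [hexp, hG, zero_div]
  -- derivative machinery at τ₀
  have hs0 : HasDerivAt (fun t : ℂ => t - τ₀) 1 τ₀ := (hasDerivAt_id τ₀).sub_const τ₀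
  have hA : HasDerivAt (fun τ => c₂ + c₁*(τ-τ₀) + g τ*(τ-τ₀)^2)
      (0 + (0 * (τ₀-τ₀) + c₁ * 1) + (deriv g τ₀ * (τ₀-τ₀)^2 + g τ₀ * ((2:ℕ) * (τ₀-τ₀)^1 * 1))) τ₀ :=
    ((hasDerivAt_const τ₀ c₂).add ((hasDerivAt_const τ₀ c₁).mul hs0)).add
      (hg.differentiableAt.hasDerivAt.mul (hs0.pow 2))
  have hB : HasDerivAt (fun τ => 6*c₂ + 2*c₁*(τ-τ₀) + deriv (deriv g) τ*(τ-τ₀)^4)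
      (0 + (0 * (τ₀-τ₀) + 2*c₁ * 1) +
        (deriv (deriv (deriv g)) τ₀ * (τ₀-τ₀)^4 + deriv (deriv g) τ₀ * ((4:ℕ) * (τ₀-τ₀)^3 * 1))) τ₀ :=
    ((hasDerivAt_const τ₀ (6*c₂)).add ((hasDerivAt_const τ₀ (2*c₁)).mul hs0)).add
      (hg2.differentiableAt.hasDerivAt.mul (hs0.pow 4))
  have hC : HasDerivAt (fun τ => -2*c₂ - c₁*(τ-τ₀) + deriv g τ*(τ-τ₀)^3)
      (0 - (0 * (τ₀-τ₀) + c₁ * 1) +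
        (deriv (deriv g) τ₀ * (τ₀-τ₀)^3 + deriv g τ₀ * ((3:ℕ) * (τ₀-τ₀)^2 * 1))) τ₀ :=
    ((hasDerivAt_const τ₀ (-2*c₂)).sub ((hasDerivAt_const τ₀ c₁).mul hs0)).add
      (hg1.differentiableAt.hasDerivAt.mul (hs0.pow 3))
  have hid : HasDerivAt (fun τ : ℂ => τ) 1 τ₀ := hasDerivAt_id τ₀
  have hDP : HasDerivAt P _ τ₀ :=
    ((((hA.mul hB).sub (hC.pow 2)).add (((hA.mul hC).mul hs0).div hid hτ)).add
        (((hasDerivAt_const τ₀ (8*ε)).mul (hA.pow 3)).div hid hτ)).sub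
      ((((hasDerivAt_const τ₀ (2*a*b)).mul hA).mul (hs0.pow 4)).div hid hτ) |>.sub
      ((hasDerivAt_const τ₀ (b^2)).mul (hs0.pow 6))
  -- P τ₀ = 0
  have hPt0 : P τ₀ = 0 := by
    have ht1 : Filter.Tendsto P (nhdsWithin τ₀ {τ₀}ᶜ) (nhds (P τ₀)) :=
      (hDP.continuousAt.tendsto).mono_left nhdsWithin_le_nhds
    have ht2 : Filter.Tendsto P (nhdsWithin τ₀ {τ₀}ᶜ) (nhds 0) :=
      Filter.Tendsto.congr' (Filter.EventuallyEq.symm hP0) tendsto_const_nhds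
    exact tendsto_nhds_unique ht1 ht2
  -- P ≡ 0 near τ₀, so deriv P τ₀ = 0
  have hPev : P =ᶠ[nhds τ₀] fun _ => 0 := by
    have h := eventually_nhdsWithin_iff.mp hP0
    filter_upwards [h] with τ hτ'
    by_cases hte : τ = τ₀
    · rw [hte]; exact hPt0
    · exact hτ' hte
  have hD0 : deriv P τ₀ = 0 := by rw [hPev.deriv_eq]; simp
  rw [hDP.deriv] at hD0
  -- now extract the two equations
  rw [hPdef] at hPt0
  have hεne : ε ≠ 0 := by rcases hε with h | h <;> simp [h]
  have hε2 : ε^2 = 1 := by rcases hε with h | h <;> simp [h]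
  simp only [sub_self] at hPt0 hD0
  norm_num at hPt0 hD0
  have hfac : c₂^2 * (2*τ₀ + 8*ε*c₂) = 0 := by
    field_simp at hPt0
    linear_combination hPt0
  have h2 : 2*τ₀ + 8*ε*c₂ = 0 := by
    rcases mul_eq_zero.mp hfac with h' | h'
    · exact absurd h' (pow_ne_zero 2 hc)
    · exact h'
  have hc₂ : c₂ = -τ₀ / (4*ε) := by
    field_simp
    linear_combination (1/2) * h2
  refine ⟨hc₂, ?_⟩
  rw [hc₂] at hD0
  field_simp at hD0
  rcases hε with h | h <;> subst h <;> norm_num at hD0 <;> field_simp at hD0 <;> ring_nf at hD0 <;> simpa [hτ] using hD0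
end

section
/- Let a, b ∈ ℂ, ε ∈ {1,−1}, τ∞ ∈ ℂ \ {0}, and let g be analytic on a neighborhood of τ∞ with g(τ∞) = a₀. Define u(τ) := −τ∞/(4ε(τ−τ∞)²) + g(τ) and, on the punctured neighborhood where u ≠ 0 and τ ≠ 0, define the Hamiltonian 𝓗(τ) := (a − i/2)·b/u(τ) + (a − i/2)²/(2τ) + τ·((u'(τ))² + b²)/(4·u(τ)²) + 4ε·u(τ). Then 𝓗(τ) − (a − i/2)²/(2τ) − 1/(τ − τ∞) extends analytically to τ∞ with value 12·ε·a₀. In particular, 𝓗 has only a simple pole at the double pole τ∞ of u, with residue 1 (the double-pole contributions of τ(u')²/(4u²) and 4εu cancel), and the constant Laurent coefficient is H₀ = 12εa₀. -/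
open Complex Filter

set_option maxHeartbeats 1000000 in
private lemma stmt15_key (A b c g gp eps τ τ₀ s : ℂ) (hs : s ≠ 0) (hD : c + g * s ^ 2 ≠ 0)
    (ht : τ = τ₀ + s) :
    A * b / ((c + g * s ^ 2) / s ^ 2)
      + τ * ((c * (-(2 * s) / (s ^ 2) ^ 2) + gp) ^ 2 + b ^ 2) /
          (4 * ((c + g * s ^ 2) / s ^ 2) ^ 2)
      + (-τ₀ / s ^ 2 + 4 * eps * g) - 1 / s
    = A * b * s ^ 2 / (c + g * s ^ 2)
      + τ * (-8 * c * g - 4 * c * gp * s - 4 * g ^ 2 * s ^ 2 + (gp ^ 2 + b ^ 2) * s ^ 4) /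
          (4 * (c + g * s ^ 2) ^ 2)
      + 4 * eps * g := by
  subst ht
  have h2 : c * (-(2 * s) / (s ^ 2) ^ 2) + gp = (-2 * c + gp * s ^ 3) / s ^ 3 := by
    field_simp [hs]
  rw [h2]
  obtain ⟨D, hDe⟩ : ∃ D, D = c + g * s ^ 2 := ⟨_, rfl⟩
  have hD' : D ≠ 0 := hDe ▸ hD
  rw [← hDe]
  field_simp [hs, hD']
  subst hDe
  ring

set_option maxHeartbeats 1000000 in
theorem stmt15 (a b ε τ₀ a₀ : ℂ) (hε : ε = 1 ∨ ε = -1) (hτ : τ₀ ≠ 0)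
    (g u H : ℂ → ℂ) (hg : AnalyticAt ℂ g τ₀) (ha₀ : g τ₀ = a₀)
    (hu : ∀ t, u t = -τ₀ / (4 * ε * (t - τ₀) ^ 2) + g t)
    (hH : ∀ t, H t = (a - Complex.I / 2) * b / u t + (a - Complex.I / 2) ^ 2 / (2 * t) +
      t * ((deriv u t) ^ 2 + b ^ 2) / (4 * (u t) ^ 2) + 4 * ε * u t) :
    ∃ h : ℂ → ℂ, AnalyticAt ℂ h τ₀ ∧ h τ₀ = 12 * ε * a₀ ∧
      ∀ᶠ τ in nhdsWithin τ₀ {τ₀}ᶜ,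
        u τ ≠ 0 ∧ H τ - (a - Complex.I / 2) ^ 2 / (2 * τ) - 1 / (τ - τ₀) = h τ := by
  have hεne : ε ≠ 0 := by rcases hε with rfl | rfl <;> norm_num
  obtain ⟨c, hcdef⟩ : ∃ c : ℂ, c = -ε * τ₀ / 4 := ⟨_, rfl⟩
  have hc : c ≠ 0 := by
    rw [hcdef]
    exact div_ne_zero (mul_ne_zero (neg_ne_zero.mpr hεne) hτ) (by norm_num)
  have h4 : 4 * ε * c = -τ₀ := by
    rcases hε with rfl | rfl <;> rw [hcdef] <;> ring
  have hu' : ∀ t, u t = c * ((t - τ₀) ^ 2)⁻¹ + g t := by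
    intro t
    rw [hu t, hcdef]
    congr 1
    rcases eq_or_ne (t - τ₀) 0 with hx | hx
    · simp [hx]
    · rcases hε with rfl | rfl <;> field_simp <;> ring
  have hueq : u = fun t => c * ((t - τ₀) ^ 2)⁻¹ + g t := funext hu'
  refine ⟨fun τ => (a - Complex.I / 2) * b * (τ - τ₀) ^ 2 / (c + g τ * (τ - τ₀) ^ 2)
      + τ * (-8 * c * g τ - 4 * c * deriv g τ * (τ - τ₀) - 4 * (g τ) ^ 2 * (τ - τ₀) ^ 2
        + ((deriv g τ) ^ 2 + b ^ 2) * (τ - τ₀) ^ 4) / (4 * (c + g τ * (τ - τ₀) ^ 2) ^ 2)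
      + 4 * ε * g τ, ?_, ?_, ?_⟩
  · -- analyticity
    have hg' : AnalyticAt ℂ (deriv g) τ₀ :=
      (AnalyticOnNhd.deriv (fun x hx => hx : AnalyticOnNhd ℂ g {y | AnalyticAt ℂ g y})) τ₀ hg
    have hid : AnalyticAt ℂ (fun τ : ℂ => τ - τ₀) τ₀ := analyticAt_id.sub analyticAt_const
    have hd : AnalyticAt ℂ (fun τ => c + g τ * (τ - τ₀) ^ 2) τ₀ :=
      analyticAt_const.add (hg.mul (hid.pow 2))
    have hdne : (fun τ => c + g τ * (τ - τ₀) ^ 2) τ₀ ≠ 0 := by simpa using hc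
    have ht1 : AnalyticAt ℂ
        (fun τ => (a - Complex.I / 2) * b * (τ - τ₀) ^ 2 / (c + g τ * (τ - τ₀) ^ 2)) τ₀ :=
      (analyticAt_const.mul (hid.pow 2)).div hd hdne
    have e1 : AnalyticAt ℂ (fun τ => -8 * c * g τ) τ₀ := analyticAt_const.mul hg
    have e2 : AnalyticAt ℂ (fun τ => 4 * c * deriv g τ) τ₀ := analyticAt_const.mul hg'
    have e2' : AnalyticAt ℂ (fun τ => 4 * c * deriv g τ * (τ - τ₀)) τ₀ := e2.mul hid
    have e12 : AnalyticAt ℂ (fun τ => -8 * c * g τ - 4 * c * deriv g τ * (τ - τ₀)) τ₀ :=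
      e1.sub e2'
    have e3 : AnalyticAt ℂ (fun τ => 4 * (g τ) ^ 2 * (τ - τ₀) ^ 2) τ₀ := by
      have : AnalyticAt ℂ (fun τ => 4 * (g τ) ^ 2) τ₀ := analyticAt_const.mul (hg.pow 2)
      exact this.mul (hid.pow 2)
    have e123 : AnalyticAt ℂ (fun τ => -8 * c * g τ - 4 * c * deriv g τ * (τ - τ₀)
        - 4 * (g τ) ^ 2 * (τ - τ₀) ^ 2) τ₀ := e12.sub e3
    have e4a : AnalyticAt ℂ (fun τ => (deriv g τ) ^ 2 + b ^ 2) τ₀ :=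
      (hg'.pow 2).add analyticAt_const
    have e4 : AnalyticAt ℂ (fun τ => ((deriv g τ) ^ 2 + b ^ 2) * (τ - τ₀) ^ 4) τ₀ :=
      e4a.mul (hid.pow 4)
    have esum : AnalyticAt ℂ (fun τ => -8 * c * g τ - 4 * c * deriv g τ * (τ - τ₀)
        - 4 * (g τ) ^ 2 * (τ - τ₀) ^ 2 + ((deriv g τ) ^ 2 + b ^ 2) * (τ - τ₀) ^ 4) τ₀ :=
      e123.add e4
    have ht2n : AnalyticAt ℂ
        (fun τ => τ * (-8 * c * g τ - 4 * c * deriv g τ * (τ - τ₀) - 4 * (g τ) ^ 2 * (τ - τ₀) ^ 2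
          + ((deriv g τ) ^ 2 + b ^ 2) * (τ - τ₀) ^ 4)) τ₀ :=
      analyticAt_id.mul esum
    have ht2d : AnalyticAt ℂ (fun τ => 4 * (c + g τ * (τ - τ₀) ^ 2) ^ 2) τ₀ :=
      analyticAt_const.mul (hd.pow 2)
    have ht2dne : (fun τ => 4 * (c + g τ * (τ - τ₀) ^ 2) ^ 2) τ₀ ≠ 0 := by
      simpa using pow_ne_zero 2 hc
    have ht2 : AnalyticAt ℂ
        (fun τ => τ * (-8 * c * g τ - 4 * c * deriv g τ * (τ - τ₀) - 4 * (g τ) ^ 2 * (τ - τ₀) ^ 2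
          + ((deriv g τ) ^ 2 + b ^ 2) * (τ - τ₀) ^ 4) / (4 * (c + g τ * (τ - τ₀) ^ 2) ^ 2)) τ₀ :=
      ht2n.div ht2d ht2dne
    have ht3 : AnalyticAt ℂ (fun τ => 4 * ε * g τ) τ₀ := analyticAt_const.mul hg
    exact (ht1.add ht2).add ht3
  · -- value at τ₀
    subst hcdef
    rcases hε with rfl | rfl <;>
      · simp only [sub_self, ha₀]
        field_simp
        simp only [ne_eq, OfNat.ofNat_ne_zero, not_false_eq_true, zero_pow, zero_mul, mul_zero,
          add_zero, sub_zero, neg_zero, zero_add]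
        field_simp
        ring
  · -- eventual equality
    have hev1 : ∀ᶠ τ in nhds τ₀, AnalyticAt ℂ g τ := hg.eventually_analyticAt
    have hev2 : ∀ᶠ τ in nhds τ₀, c + g τ * (τ - τ₀) ^ 2 ≠ 0 := by
      have hcont : ContinuousAt (fun τ => c + g τ * (τ - τ₀) ^ 2) τ₀ :=
        continuousAt_const.add ((hg.continuousAt).mul
          ((continuousAt_id.sub continuousAt_const).pow 2))
      have h0 : (fun τ => c + g τ * (τ - τ₀) ^ 2) τ₀ ≠ 0 := by simpa using hc
      exact hcont.eventually_ne h0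
    filter_upwards [hev1.filter_mono nhdsWithin_le_nhds, hev2.filter_mono nhdsWithin_le_nhds,
      self_mem_nhdsWithin] with τ hgτ hD hτne
    have hτne' : τ ≠ τ₀ := hτne
    have hs : τ - τ₀ ≠ 0 := sub_ne_zero.mpr hτne'
    have huτ : u τ = (c + g τ * (τ - τ₀) ^ 2) / (τ - τ₀) ^ 2 := by
      rw [hu' τ]; field_simp
    have hune : u τ ≠ 0 := by
      rw [huτ]; exact div_ne_zero hD (pow_ne_zero 2 hs)
    refine ⟨hune, ?_⟩
    have h1 : HasDerivAt (fun t : ℂ => (t - τ₀) ^ 2) (2 * (τ - τ₀)) τ := by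
      simpa using ((hasDerivAt_id τ).sub_const τ₀).fun_pow 2
    have hdu : deriv u τ = c * (-(2 * (τ - τ₀)) / ((τ - τ₀) ^ 2) ^ 2) + deriv g τ := by
      rw [hueq]
      exact (((h1.inv (pow_ne_zero 2 hs)).const_mul c).add
        (hgτ.differentiableAt.hasDerivAt)).deriv
    have hT4 : 4 * ε * u τ = -τ₀ / (τ - τ₀) ^ 2 + 4 * ε * g τ := by
      rw [huτ]; field_simp; linear_combination h4
    rw [hH τ, hT4]
    have hX : ∀ T1 X T3 T4 R H' : ℂ, (T1 + T3 + T4 - R = H') →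
        (T1 + X + T3 + T4 - X - R = H') := by
      intro T1 X T3 T4 R H' h; linear_combination h
    apply hX
    rw [huτ, hdu]
    exact stmt15_key (a - Complex.I / 2) b c (g τ) (deriv g τ) ε τ τ₀ (τ - τ₀) hs hD (by ring)
end

section
/- Let a, b ∈ ℂ, ε ∈ {1, −1}, and let u, φ be differentiable complex-valued functions on an interval I ⊂ (0, ∞), with u nowhere zero and u twice differentiable, satisfying the system u'' = (u')²/u − u'/τ + (−8εu² + 2ab)/τ + b²/u and φ' = 2a/τ + b/u. Define A(τ) := (u/τ)·e^{iφ}, B(τ) := −(u/τ)·e^{−iφ}, C(τ) := ετ·A'/(4u), D(τ) := −ετ·B'/(4u), and S(τ) := ε·u/τ (so S² = −A·B). Then on I the system of isomonodromy deformations holds: A' = 4·C·S, B' = −4·D·S, (τC)' = 2ia·C − 2τ·A, (τD)' = −2ia·D + 2τ·B, and S' = 2·(A·D − B·C). -/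
open Complex

set_option maxHeartbeats 1600000 in
theorem stmt18 (a b ε : ℂ) (hε : ε = 1 ∨ ε = -1)
    (D : Set ℝ) (hD : IsOpen D) (hDpos : D ⊆ Set.Ioi 0)
    (u φ : ℝ → ℂ)
    (hu0 : ∀ τ ∈ D, u τ ≠ 0)
    (hud : ∀ τ ∈ D, DifferentiableAt ℝ u τ)
    (hud2 : ∀ τ ∈ D, DifferentiableAt ℝ (deriv u) τ)
    (hφd : ∀ τ ∈ D, DifferentiableAt ℝ φ τ)
    (hueq : ∀ τ ∈ D, deriv (deriv u) τ =
      (deriv u τ) ^ 2 / u τ - deriv u τ / (τ : ℂ) +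
        (-8 * ε * (u τ) ^ 2 + 2 * a * b) / (τ : ℂ) + b ^ 2 / u τ)
    (hφeq : ∀ τ ∈ D, deriv φ τ = 2 * a / (τ : ℂ) + b / u τ)
    (A B C E S : ℝ → ℂ)
    (hA : ∀ τ, A τ = (u τ / (τ : ℂ)) * Complex.exp (Complex.I * φ τ))
    (hB : ∀ τ, B τ = -(u τ / (τ : ℂ)) * Complex.exp (-(Complex.I * φ τ)))
    (hC : ∀ τ, C τ = ε * (τ : ℂ) * deriv A τ / (4 * u τ))
    (hE : ∀ τ, E τ = -(ε * (τ : ℂ) * deriv B τ / (4 * u τ)))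
    (hS : ∀ τ, S τ = ε * u τ / (τ : ℂ)) :
    ∀ τ ∈ D,
      deriv A τ = 4 * C τ * S τ ∧
      deriv B τ = -(4 * E τ * S τ) ∧
      deriv (fun t : ℝ => (t : ℂ) * C t) τ = 2 * Complex.I * a * C τ - 2 * (τ : ℂ) * A τ ∧
      deriv (fun t : ℝ => (t : ℂ) * E t) τ = -(2 * Complex.I * a * E τ) + 2 * (τ : ℂ) * B τ ∧
      deriv S τ = 2 * (A τ * E τ - B τ * C τ) := by
  have hco : ∀ t : ℝ, HasDerivAt (fun s : ℝ => (s:ℂ)) 1 t := fun t => by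
    simpa using (hasDerivAt_id t).ofReal_comp
  have hne : ∀ t ∈ D, (t:ℂ) ≠ 0 := fun t ht => by
    exact_mod_cast ne_of_gt (Set.mem_Ioi.mp (hDpos ht))
  -- derivative of A on D
  have hdA : ∀ t ∈ D, HasDerivAt A
      ((deriv u t * (t:ℂ) - u t * 1) / (t:ℂ)^2 * Complex.exp (Complex.I * φ t) +
        u t / (t:ℂ) * (Complex.exp (Complex.I * φ t) * (Complex.I * deriv φ t))) t := by
    intro t ht
    have hAfun : A = fun s => (u s / (s:ℂ)) * Complex.exp (Complex.I * φ s) := funext hA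
    rw [hAfun]
    exact (((hud t ht).hasDerivAt.div (hco t) (hne t ht)).mul
      (((hφd t ht).hasDerivAt.const_mul Complex.I).cexp))
  -- derivative of B on D
  have hdB : ∀ t ∈ D, HasDerivAt B
      (-((deriv u t * (t:ℂ) - u t * 1) / (t:ℂ)^2) * Complex.exp (-(Complex.I * φ t)) +
        -(u t / (t:ℂ)) * (Complex.exp (-(Complex.I * φ t)) * -(Complex.I * deriv φ t))) t := by
    intro t ht
    have hBfun : B = fun s => -(u s / (s:ℂ)) * Complex.exp (-(Complex.I * φ s)) := funext hB
    rw [hBfun]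
    exact (((hud t ht).hasDerivAt.div (hco t) (hne t ht)).neg.mul
      (((hφd t ht).hasDerivAt.const_mul Complex.I).neg.cexp))
  -- τC and τE as explicit functions on D
  have hGeq : ∀ t ∈ D, (t:ℂ) * C t =
      (ε/4) * ((t:ℂ) * deriv u t / u t - 1 + Complex.I * (2*a + b*(t:ℂ)/u t)) *
        Complex.exp (Complex.I * φ t) := by
    intro t ht
    rw [hC t, (hdA t ht).deriv, hφeq t ht]
    have h1 := hu0 t ht
    have h2 := hne t ht
    have h4 : ((t:ℂ))^4 ≠ 0 := pow_ne_zero _ h2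
    have hu2 : (u t)^2 ≠ 0 := pow_ne_zero _ h1
    field_simp
  have hHeq : ∀ t ∈ D, (t:ℂ) * E t =
      (ε/4) * ((t:ℂ) * deriv u t / u t - 1 - Complex.I * (2*a + b*(t:ℂ)/u t)) *
        Complex.exp (-(Complex.I * φ t)) := by
    intro t ht
    rw [hE t, (hdB t ht).deriv, hφeq t ht]
    have h1 := hu0 t ht
    have h2 := hne t ht
    have h4 : ((t:ℂ))^4 ≠ 0 := pow_ne_zero _ h2
    have hu2 : (u t)^2 ≠ 0 := pow_ne_zero _ h1
    have he := Complex.exp_ne_zero (Complex.I * φ t)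
    rw [Complex.exp_neg]
    field_simp
    ring
  intro τ hτ
  have hu := hu0 τ hτ
  have ht0 := hne τ hτ
  have hA' := (hdA τ hτ).deriv
  have hB' := (hdB τ hτ).deriv
  have hexp := Complex.exp_ne_zero (Complex.I * φ τ)
  refine ⟨?_, ?_, ?_, ?_, ?_⟩
  · -- A' = 4 C S
    rw [hC τ, hS τ]
    rcases hε with rfl | rfl <;> field_simp <;> ring
  · -- B' = -(4 E S)
    rw [hE τ, hS τ]
    rcases hε with rfl | rfl <;> field_simp <;> ring
  · -- (τC)' = 2iaC - 2τA
    have hev : (fun t : ℝ => (t:ℂ) * C t) =ᶠ[nhds τ]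
        (fun t : ℝ => (ε/4) * ((t:ℂ) * deriv u t / u t - 1 + Complex.I * (2*a + b*(t:ℂ)/u t)) *
          Complex.exp (Complex.I * φ t)) :=
      Filter.eventuallyEq_of_mem (hD.mem_nhds hτ) hGeq
    rw [hev.deriv_eq]
    have hm1 : HasDerivAt (fun t : ℝ => (t:ℂ) * deriv u t / u t)
        (((1 * deriv u τ + (τ:ℂ) * deriv (deriv u) τ) * u τ -
          (τ:ℂ) * deriv u τ * deriv u τ) / (u τ)^2) τ :=
      ((hco τ).mul (hud2 τ hτ).hasDerivAt).div (hud τ hτ).hasDerivAt hu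
    have hm2 : HasDerivAt (fun t : ℝ => b * (t:ℂ) / u t)
        ((b * 1 * u τ - b * (τ:ℂ) * deriv u τ) / (u τ)^2) τ :=
      ((hco τ).const_mul b).div (hud τ hτ).hasDerivAt hu
    have hm3 := ((hasDerivAt_const τ ((2:ℂ)*a)).add hm2).const_mul Complex.I
    have hm4 := ((hm1.sub_const 1).add hm3).const_mul (ε/4)
    have he' := ((hφd τ hτ).hasDerivAt.const_mul Complex.I).cexp
    have hG : HasDerivAt
        (fun t : ℝ => (ε/4) * ((t:ℂ) * deriv u t / u t - 1 + Complex.I * (2*a + b*(t:ℂ)/u t)) *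
          Complex.exp (Complex.I * φ t))
        ((ε/4) * (((1 * deriv u τ + (τ:ℂ) * deriv (deriv u) τ) * u τ -
            (τ:ℂ) * deriv u τ * deriv u τ) / (u τ)^2
            + Complex.I * (0 + (b * 1 * u τ - b * (τ:ℂ) * deriv u τ) / (u τ)^2)) *
          Complex.exp (Complex.I * φ τ) +
          (ε/4) * ((τ:ℂ) * deriv u τ / u τ - 1 + Complex.I * (2*a + b*(τ:ℂ)/u τ)) *
          (Complex.exp (Complex.I * φ τ) * (Complex.I * deriv φ τ))) τ := hm4.mul he'
    rw [hG.deriv, hC τ, hA τ, hA']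
    have hu2 : (u τ)^2 ≠ 0 := pow_ne_zero _ hu
    field_simp
    rw [hueq τ hτ, hφeq τ hτ]
    field_simp
    try first
    | rw [div_eq_iff (by simp [hu, ht0])]
    | rw [eq_div_iff (by simp [hu, ht0])]
    rcases hε with rfl | rfl <;> ring_nf <;> simp [Complex.I_sq] <;> ring_nf
  · -- (τE)' = -2iaE + 2τB
    have hev : (fun t : ℝ => (t:ℂ) * E t) =ᶠ[nhds τ]
        (fun t : ℝ => (ε/4) * ((t:ℂ) * deriv u t / u t - 1 - Complex.I * (2*a + b*(t:ℂ)/u t)) *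
          Complex.exp (-(Complex.I * φ t))) :=
      Filter.eventuallyEq_of_mem (hD.mem_nhds hτ) hHeq
    rw [hev.deriv_eq]
    have hm1 : HasDerivAt (fun t : ℝ => (t:ℂ) * deriv u t / u t)
        (((1 * deriv u τ + (τ:ℂ) * deriv (deriv u) τ) * u τ -
          (τ:ℂ) * deriv u τ * deriv u τ) / (u τ)^2) τ :=
      ((hco τ).mul (hud2 τ hτ).hasDerivAt).div (hud τ hτ).hasDerivAt hu
    have hm2 : HasDerivAt (fun t : ℝ => b * (t:ℂ) / u t)
        ((b * 1 * u τ - b * (τ:ℂ) * deriv u τ) / (u τ)^2) τ :=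
      ((hco τ).const_mul b).div (hud τ hτ).hasDerivAt hu
    have hm3 := ((hasDerivAt_const τ ((2:ℂ)*a)).add hm2).const_mul Complex.I
    have hm4 := ((hm1.sub_const 1).sub hm3).const_mul (ε/4)
    have he' := (((hφd τ hτ).hasDerivAt.const_mul Complex.I).neg).cexp
    have hG : HasDerivAt
        (fun t : ℝ => (ε/4) * ((t:ℂ) * deriv u t / u t - 1 - Complex.I * (2*a + b*(t:ℂ)/u t)) *
          Complex.exp (-(Complex.I * φ t)))
        ((ε/4) * (((1 * deriv u τ + (τ:ℂ) * deriv (deriv u) τ) * u τ -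
            (τ:ℂ) * deriv u τ * deriv u τ) / (u τ)^2
            - Complex.I * (0 + (b * 1 * u τ - b * (τ:ℂ) * deriv u τ) / (u τ)^2)) *
          Complex.exp (-(Complex.I * φ τ)) +
          (ε/4) * ((τ:ℂ) * deriv u τ / u τ - 1 - Complex.I * (2*a + b*(τ:ℂ)/u τ)) *
          (Complex.exp (-(Complex.I * φ τ)) * -(Complex.I * deriv φ τ))) τ := hm4.mul he'
    rw [hG.deriv, hE τ, hB τ, hB']
    have hu2 : (u τ)^2 ≠ 0 := pow_ne_zero _ hu
    rw [Complex.exp_neg]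
    field_simp
    rw [hueq τ hτ, hφeq τ hτ]
    field_simp
    try first
    | rw [div_eq_iff (by simp [hu, ht0, hexp])]
    | rw [eq_div_iff (by simp [hu, ht0, hexp])]
    rcases hε with rfl | rfl <;> ring_nf <;> simp [Complex.I_sq] <;> ring_nf
  · -- S' = 2(AE - BC)
    have hSfun : S = fun t => ε * u t / (t:ℂ) := funext hS
    have hdS : HasDerivAt S ((ε * deriv u τ * (τ:ℂ) - ε * u τ * 1) / (τ:ℂ)^2) τ := by
      rw [hSfun]
      exact ((hud τ hτ).hasDerivAt.const_mul ε).div (hco τ) ht0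
    rw [hdS.deriv, hA τ, hB τ, hC τ, hE τ, hA', hB']
    rw [Complex.exp_neg]
    field_simp
    rw [hφeq τ hτ]
    field_simp
    try first
    | rw [div_eq_iff (by simp [hu, ht0, hexp])]
    | rw [eq_div_iff (by simp [hu, ht0, hexp])]
    rcases hε with rfl | rfl <;> ring_nf <;> simp [Complex.I_sq] <;> ring_nf
end

section
/- Let a ∈ ℂ, ε ∈ {1, −1}, and let A, B, C, D, S be differentiable complex-valued functions on an interval I ⊂ (0, ∞), with A, B, S nowhere zero, satisfying S² = −A·B and the system A' = 4CS, B' = −4DS, (τC)' = 2iaC − 2τA, (τD)' = −2iaD + 2τB, S' = 2(AD − BC). Define u := ετ·S and β(τ) := u(τ)·(w(τ) − 2a/τ), where w := −(i/2)·(A'/A − B'/B). Then β'(τ) = 0 for all τ ∈ I; i.e., β is constant on I (this constant is the parameter b of the degenerate Painlevé III equation). -/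
open Complex

theorem stmt19 (a ε : ℂ) (hε : ε = 1 ∨ ε = -1)
    (D : Set ℝ) (hD : IsOpen D) (hDpos : D ⊆ Set.Ioi 0)
    (A B C E S : ℝ → ℂ)
    (hAd : ∀ τ ∈ D, DifferentiableAt ℝ A τ)
    (hBd : ∀ τ ∈ D, DifferentiableAt ℝ B τ)
    (hCd : ∀ τ ∈ D, DifferentiableAt ℝ C τ)
    (hEd : ∀ τ ∈ D, DifferentiableAt ℝ E τ)
    (hSd : ∀ τ ∈ D, DifferentiableAt ℝ S τ)
    (hA0 : ∀ τ ∈ D, A τ ≠ 0) (hB0 : ∀ τ ∈ D, B τ ≠ 0) (hS0 : ∀ τ ∈ D, S τ ≠ 0)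
    (hS2 : ∀ τ ∈ D, S τ ^ 2 = -(A τ * B τ))
    (heqA : ∀ τ ∈ D, deriv A τ = 4 * C τ * S τ)
    (heqB : ∀ τ ∈ D, deriv B τ = -(4 * E τ * S τ))
    (heqC : ∀ τ ∈ D, deriv (fun t : ℝ => (t : ℂ) * C t) τ =
      2 * Complex.I * a * C τ - 2 * (τ : ℂ) * A τ)
    (heqE : ∀ τ ∈ D, deriv (fun t : ℝ => (t : ℂ) * E t) τ =
      -(2 * Complex.I * a * E τ) + 2 * (τ : ℂ) * B τ)
    (heqS : ∀ τ ∈ D, deriv S τ = 2 * (A τ * E τ - B τ * C τ))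
    (u w β : ℝ → ℂ)
    (hu : ∀ τ, u τ = ε * (τ : ℂ) * S τ)
    (hw : ∀ τ, w τ = -(Complex.I / 2) * (deriv A τ / A τ - deriv B τ / B τ))
    (hβ : ∀ τ, β τ = u τ * (w τ - 2 * a / (τ : ℂ))) :
    ∀ τ ∈ D, deriv β τ = 0 := by
  intro τ hτ
  set g : ℝ → ℂ := fun t =>
    2 * Complex.I * ε * (A t * ((t : ℂ) * E t) + B t * ((t : ℂ) * C t))
      - 2 * a * ε * S t with hg
  -- β = g on D
  have hβg : ∀ t ∈ D, β t = g t := by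
    intro t ht
    have ht0 : (t : ℂ) ≠ 0 := by
      have := hDpos ht
      simp only [Set.mem_Ioi] at this
      exact_mod_cast this.ne'
    have hA := hA0 t ht; have hB := hB0 t ht; have hS := hS0 t ht
    have hs2 := hS2 t ht
    rw [hβ, hu, hw, heqA t ht, heqB t ht, hg]
    field_simp
    linear_combination (-(4 * Complex.I * ε * (t : ℂ) * (C t * B t + E t * A t))) * hs2
  have hmem : D ∈ nhds τ := hD.mem_nhds hτ
  have heq : β =ᶠ[nhds τ] g := Filter.eventuallyEq_of_mem hmem hβg
  rw [heq.deriv_eq]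
  -- compute deriv g
  have hid : HasDerivAt (fun t : ℝ => (t : ℂ)) 1 τ := by
    simpa using (hasDerivAt_id τ).ofReal_comp
  have hC := (hCd τ hτ).hasDerivAt
  have hE0 := (hEd τ hτ).hasDerivAt
  have hA' := (hAd τ hτ).hasDerivAt
  have hB' := (hBd τ hτ).hasDerivAt
  have hS' := (hSd τ hτ).hasDerivAt
  have htC : HasDerivAt (fun t : ℝ => (t : ℂ) * C t)
      (2 * Complex.I * a * C τ - 2 * (τ : ℂ) * A τ) τ := by
    have h := hid.mul hC
    have := h.differentiableAt.hasDerivAt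
    change HasDerivAt (fun t : ℝ => (t : ℂ) * C t) (deriv (fun t : ℝ => (t : ℂ) * C t) τ) τ at this
    rwa [heqC τ hτ] at this
  have htE : HasDerivAt (fun t : ℝ => (t : ℂ) * E t)
      (-(2 * Complex.I * a * E τ) + 2 * (τ : ℂ) * B τ) τ := by
    have h := hid.mul hE0
    have := h.differentiableAt.hasDerivAt
    change HasDerivAt (fun t : ℝ => (t : ℂ) * E t) (deriv (fun t : ℝ => (t : ℂ) * E t) τ) τ at this
    rwa [heqE τ hτ] at this
  have hgd : HasDerivAt g
      (2 * Complex.I * ε *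
        (deriv A τ * ((τ : ℂ) * E τ)
          + A τ * (-(2 * Complex.I * a * E τ) + 2 * (τ : ℂ) * B τ)
          + (deriv B τ * ((τ : ℂ) * C τ)
            + B τ * (2 * Complex.I * a * C τ - 2 * (τ : ℂ) * A τ)))
        - 2 * a * ε * deriv S τ) τ := by
    exact (((hA'.mul htE).add (hB'.mul htC)).const_mul
      (2 * Complex.I * ε)).sub (hS'.const_mul (2 * a * ε))
  rw [hgd.deriv, heqA τ hτ, heqB τ hτ, heqS τ hτ]
  ring_nf
  simp [Complex.I_sq]
end
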